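/- With the hypotheses of the previous statement, suppose additionally that v̄(D(φ)) = Γ/2Γ. Then the image under v̄ of the nonzero values of the pure part φ' is Γ/2Γ ∖ {v̄(αₙ)}, where v̄(αₙ) is identified with the class of v(α₁^{d₁}⋯αₙ^{dₙ}) for d = (0,…,0,1). -/

import Mathlib

/-- The subfield of squares `F²` of a field of characteristic 2. -/
def sqSubfield (F : Type*) [Field F] [CharP F 2] : Subfield F where
  carrier := {x | ∃ y : F, y ^ 2 = x}
  mul_mem' := by rintro a b ⟨y, rfl⟩ ⟨z, rfl⟩; exact ⟨y * z, by ring⟩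
  one_mem' := ⟨1, one_pow 2⟩
  add_mem' := by
    rintro a b ⟨y, rfl⟩ ⟨z, rfl⟩
    exact ⟨y + z, by rw [add_sq]; linear_combination (y*z) * (CharP.cast_eq_zero F 2)⟩
  zero_mem' := ⟨0, by ring⟩
  neg_mem' := by rintro a ⟨y, rfl⟩; exact ⟨y, (CharTwo.neg_eq _).symm⟩
  inv_mem' := by rintro a ⟨y, rfl⟩; exact ⟨y⁻¹, by rw [inv_pow]⟩

/-- The monomial `β₁^{d₁} ⋯ βₙ^{dₙ}`. -/
def mono {R : Type*} [CommRing R] {n : ℕ} (β : Fin n → R) (d : Fin n → Bool) : R :=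
  ∏ i, if d i then β i else 1

/-- The diagonal bilinear `n`-fold Pfister form `⟨⟨β₁,…,βₙ⟩⟩_b`. -/
def bPf (F : Type*) [Field F] {n : ℕ} (β : Fin n → F) (v w : (Fin n → Bool) → F) : F :=
  ∑ d, mono β d * v d * w d

/-- Pure part of the bilinear Pfister form. -/
def bPfPure (F : Type*) [Field F] {n : ℕ} (β : Fin n → F)
    (v w : {d : Fin n → Bool // d ≠ fun _ => false} → F) : F :=
  ∑ d, mono β d.1 * v d * w d

/-- Anisotropy of a bilinear form. -/
def BAniso (F : Type*) [Field F] {V : Type*} [AddCommGroup V] [Module F V]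
    (B : V → V → F) : Prop :=
  ∀ v : V, v ≠ 0 → B v v ≠ 0

/-- Isometry of bilinear forms. -/
def BilinIsom (F : Type*) [Field F] {V W : Type*} [AddCommGroup V] [Module F V]
    [AddCommGroup W] [Module F W] (B₁ : V → V → F) (B₂ : W → W → F) : Prop :=
  ∃ e : V ≃ₗ[F] W, ∀ v w, B₂ (e v) (e w) = B₁ v w

/-- Isometry of quadratic forms (given as value functions). -/
def QuadIsom (F : Type*) [Field F] {V W : Type*} [AddCommGroup V] [Module F V]
    [AddCommGroup W] [Module F W] (q₁ : V → F) (q₂ : W → F) : Prop :=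
  ∃ e : V ≃ₗ[F] W, ∀ v, q₂ (e v) = q₁ v

/-- The quadratic Pfister form `⟨⟨β₁,…,β_m, a]]` as a value function. -/
def qPf (R : Type*) [CommRing R] {m : ℕ} (β : Fin m → R) (a : R)
    (x : (Fin m → Bool) → R × R) : R :=
  ∑ e, mono β e * ((x e).1 ^ 2 + (x e).1 * (x e).2 + a * (x e).2 ^ 2)

/-- Minimal index where `d` is `true`. -/
noncomputable def minIdx {n : ℕ} (d : Fin n → Bool) (hd : d ≠ fun _ => false) : Fin n :=
  (Finset.univ.filter fun i => d i = true).min' (by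
    obtain ⟨i, hi⟩ := Function.ne_iff.mp hd
    exact ⟨i, Finset.mem_filter.mpr ⟨Finset.mem_univ i, by simpa using hi⟩⟩)

/-- Remove the `ℓ`-th entry from a tuple. -/
def removeIdx {R : Type*} {n : ℕ} (α : Fin n → R) (ℓ : Fin n) (i : Fin (n - 1)) : R :=
  if h : (i : ℕ) < (ℓ : ℕ) then α ⟨i, by omega⟩ else α ⟨(i : ℕ) + 1, by omega⟩

/-- First `n-1` entries of a tuple. -/
def front {R : Type*} {n : ℕ} (α : Fin n → R) (i : Fin (n - 1)) : R :=
  α ⟨i, by omega⟩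

/-- Last entry of a tuple (junk value `0` if the tuple is empty). -/
def qlast {R : Type*} [CommRing R] {n : ℕ} (α : Fin n → R) : R :=
  if h : n = 0 then 0 else α ⟨n - 1, by omega⟩

section valHelpers
variable {F Γ : Type*} [Field F] [CharP F 2] [AddCommGroup Γ] [LinearOrder Γ]
  [IsOrderedAddMonoid Γ]
variable (v : F → Γ)
variable (hmul : ∀ x y : F, x ≠ 0 → y ≠ 0 → v (x * y) = v x + v y)
variable (hadd : ∀ x y : F, x ≠ 0 → y ≠ 0 → x + y ≠ 0 → min (v x) (v y) ≤ v (x + y))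

omit [CharP F 2] in
include hmul in
lemma v_one' : v 1 = 0 := by
  have h := hmul 1 1 one_ne_zero one_ne_zero
  rw [mul_one] at h
  have := h.symm
  rwa [add_eq_left] at this

omit [CharP F 2] in
include hmul in
lemma v_sq' (x : F) (hx : x ≠ 0) : v (x ^ 2) = 2 • v x := by
  rw [sq, hmul x x hx hx, two_smul]

omit [CharP F 2] in
include hmul in
lemma v_prod' {ι : Type*} (s : Finset ι) (f : ι → F) (hf : ∀ i ∈ s, f i ≠ 0) :
    v (∏ i ∈ s, f i) = ∑ i ∈ s, v (f i) := by
  classical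
  induction s using Finset.induction_on with
  | empty => simpa using v_one' v hmul
  | @insert a t ha ih =>
    rw [Finset.prod_insert ha, Finset.sum_insert ha,
      hmul _ _ (hf a (Finset.mem_insert_self a t))
        (Finset.prod_ne_zero_iff.mpr fun i hi => hf i (Finset.mem_insert_of_mem hi)),
      ih fun i hi => hf i (Finset.mem_insert_of_mem hi)]

include hadd in
lemma v_dom' (x y : F) (hx : x ≠ 0) (hy : y = 0 ∨ (y ≠ 0 ∧ v x < v y)) :
    x + y ≠ 0 ∧ v (x + y) = v x := by
  have h2 : (2 : F) = 0 := by exact_mod_cast CharP.cast_eq_zero F 2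
  rcases hy with rfl | ⟨hy0, hlt⟩
  · simpa using hx
  · have hne : x + y ≠ 0 := by
      intro h
      have hyx : y = x := by linear_combination h - x * h2
      rw [hyx] at hlt; exact lt_irrefl _ hlt
    refine ⟨hne, ?_⟩
    have h1 : v x ≤ v (x + y) := by
      have := hadd x y hx hy0 hne
      rwa [min_eq_left hlt.le] at this
    have hxy : (x + y) + y = x := by linear_combination y * h2
    have h3 : min (v (x + y)) (v y) ≤ v x := by
      have := hadd (x + y) y hne hy0 (by rw [hxy]; exact hx)
      rwa [hxy] at this
    rcases le_or_gt (v (x + y)) (v x) with h | h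
    · exact le_antisymm h h1
    · exact absurd h3 (not_le.mpr (lt_min h hlt))

omit [CharP F 2] in
lemma half_lt' {a b : Γ} (h : a + a < b + b) : a < b := by
  by_contra hc; push_neg at hc; exact absurd (add_le_add hc hc) (not_le.mpr h)

omit [CharP F 2] in
lemma neg_add_lt' {c x : Γ} (hc : c < 0) : c + x < x := by
  have := add_lt_add_left hc x; rwa [zero_add] at this

include hmul hadd in
lemma v_sum' {ι : Type*} (s : Finset ι) (f : ι → F)
    (hd : ∀ i ∈ s, ∀ j ∈ s, i ≠ j → f i ≠ 0 → f j ≠ 0 → v (f i) ≠ v (f j)) :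
    (∑ i ∈ s, f i) = 0 ∨
      ((∑ i ∈ s, f i) ≠ 0 ∧ ∃ i ∈ s, f i ≠ 0 ∧ v (∑ i ∈ s, f i) = v (f i)) := by
  classical
  induction s using Finset.induction_on with
  | empty => left; simp
  | @insert a t ha ih =>
    rw [Finset.sum_insert ha]
    have ih' := ih fun i hi j hj =>
      hd i (Finset.mem_insert_of_mem hi) j (Finset.mem_insert_of_mem hj)
    by_cases hfa : f a = 0
    · rw [hfa, zero_add]
      rcases ih' with h | ⟨h1, i, hi, h2, h3⟩
      · exact Or.inl h
      · exact Or.inr ⟨h1, i, Finset.mem_insert_of_mem hi, h2, h3⟩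
    · rcases ih' with h | ⟨h1, i, hi, hfi, h3⟩
      · rw [h, add_zero]
        exact Or.inr ⟨hfa, a, Finset.mem_insert_self a t, hfa, rfl⟩
      · have hai : a ≠ i := fun h => ha (h ▸ hi)
        have hne : v (f a) ≠ v (∑ i ∈ t, f i) := by
          rw [h3]
          exact hd a (Finset.mem_insert_self a t) i (Finset.mem_insert_of_mem hi) hai hfa hfi
        rcases lt_or_gt_of_ne hne with hlt | hgt
        · obtain ⟨h4, h5⟩ := v_dom' v hadd (f a) (∑ i ∈ t, f i) hfa (Or.inr ⟨h1, hlt⟩)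
          exact Or.inr ⟨h4, a, Finset.mem_insert_self a t, hfa, h5⟩
        · rw [add_comm]
          obtain ⟨h4, h5⟩ := v_dom' v hadd (∑ i ∈ t, f i) (f a) h1 (Or.inr ⟨hfa, hgt⟩)
          exact Or.inr ⟨h4, i, Finset.mem_insert_of_mem hi, hfi, h5.trans h3⟩

include hmul hadd in
lemma v_block' (an : F) (han : an ≠ 0) (hneg : v an < 0) (hcl : ∀ h : Γ, v an ≠ 2 • h)
    (a b : F) (hab : ¬(a = 0 ∧ b = 0)) :
    a ^ 2 + a * b + an * b ^ 2 ≠ 0 ∧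
      ((a ≠ 0 ∧ v (a ^ 2 + a * b + an * b ^ 2) = 2 • v a) ∨
        (b ≠ 0 ∧ v (a ^ 2 + a * b + an * b ^ 2) = v an + 2 • v b)) := by
  have vsq : ∀ x : F, x ≠ 0 → v (x ^ 2) = 2 • v x := fun x hx => by
    rw [sq, hmul x x hx hx, two_smul]
  by_cases hb : b = 0
  · have ha : a ≠ 0 := fun h => hab ⟨h, hb⟩
    have he : a ^ 2 + a * b + an * b ^ 2 = a ^ 2 := by rw [hb]; ring
    rw [he]
    exact ⟨pow_ne_zero 2 ha, Or.inl ⟨ha, vsq a ha⟩⟩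
  by_cases ha : a = 0
  · have he : a ^ 2 + a * b + an * b ^ 2 = an * b ^ 2 := by rw [ha]; ring
    have hb2 : (b ^ 2 : F) ≠ 0 := pow_ne_zero 2 hb
    rw [he, hmul an _ han hb2, vsq b hb]
    exact ⟨mul_ne_zero han hb2, Or.inr ⟨hb, rfl⟩⟩
  have hb2 : (b ^ 2 : F) ≠ 0 := pow_ne_zero 2 hb
  have ha2 : (a ^ 2 : F) ≠ 0 := pow_ne_zero 2 ha
  have hab' : a * b ≠ 0 := mul_ne_zero ha hb
  have hA : v (a ^ 2) = v a + v a := by rw [sq, hmul a a ha ha]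
  have hB : v (an * b ^ 2) = v an + (v b + v b) := by
    rw [hmul an _ han hb2, sq, hmul b b hb hb]
  have hM : v (a * b) = v a + v b := hmul a b ha hb
  have hABne : v a + v a ≠ v an + (v b + v b) := by
    intro h
    apply hcl (v a - v b)
    rw [two_smul]
    have h2 : v an = v a + v a - (v b + v b) := by rw [h]; abel
    rw [h2]; abel
  rcases lt_or_gt_of_ne hABne with hlt | hgt
  · have hvab : v a < v b := half_lt' (hlt.trans (neg_add_lt' hneg))
    by_cases hw : a * b + an * b ^ 2 = 0
    · have he : a ^ 2 + a * b + an * b ^ 2 = a ^ 2 := by rw [add_assoc, hw, add_zero]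
      rw [he]
      exact ⟨ha2, Or.inl ⟨ha, vsq a ha⟩⟩
    · have hwv : v (a ^ 2) < v (a * b + an * b ^ 2) := by
        have hmin := hadd (a * b) (an * b ^ 2) hab' (mul_ne_zero han hb2) hw
        refine lt_of_lt_of_le (lt_min ?_ ?_) hmin
        · rw [hA, hM]; exact add_lt_add_right hvab (v a)
        · rw [hA, hB]; exact hlt
      obtain ⟨hne, hv⟩ := v_dom' v hadd (a ^ 2) (a * b + an * b ^ 2) ha2
        (Or.inr ⟨hw, hwv⟩)
      have he : a ^ 2 + a * b + an * b ^ 2 = a ^ 2 + (a * b + an * b ^ 2) := by ring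
      rw [he]
      exact ⟨hne, Or.inl ⟨ha, by rw [hv, vsq a ha]⟩⟩
  · have key : v an + v b < v a := by
      by_contra hc
      push_neg at hc
      have h1 : v a + v a ≤ (v an + v b) + (v an + v b) := add_le_add hc hc
      have h2 : (v an + v b) + (v an + v b) = v an + (v an + (v b + v b)) := by abel
      have h3 : v an + (v an + (v b + v b)) < v an + (v a + v a) := add_lt_add_right hgt _
      have h4 : v an + (v a + v a) < v a + v a := neg_add_lt' hneg
      exact absurd (h1.trans_lt (h2 ▸ h3.trans h4)) (lt_irrefl _)
    by_cases hw : a ^ 2 + a * b = 0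
    · have he : a ^ 2 + a * b + an * b ^ 2 = an * b ^ 2 := by rw [hw, zero_add]
      rw [he, hB]
      exact ⟨mul_ne_zero han hb2, Or.inr ⟨hb, by rw [two_smul]⟩⟩
    · have hwv : v (an * b ^ 2) < v (a ^ 2 + a * b) := by
        have hmin := hadd (a ^ 2) (a * b) ha2 hab' hw
        refine lt_of_lt_of_le (lt_min ?_ ?_) hmin
        · rw [hA, hB]; exact hgt
        · rw [hB, hM]
          have he2 : v an + (v b + v b) = (v an + v b) + v b := by abel
          rw [he2]
          exact add_lt_add_left key (v b)
      obtain ⟨hne, hv⟩ := v_dom' v hadd (an * b ^ 2) (a ^ 2 + a * b)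
        (mul_ne_zero han hb2) (Or.inr ⟨hw, hwv⟩)
      have he : a ^ 2 + a * b + an * b ^ 2 = an * b ^ 2 + (a ^ 2 + a * b) := by ring
      rw [he]
      exact ⟨hne, Or.inr ⟨hb, by rw [hv, hB, two_smul]⟩⟩

end valHelpers

/-- if moreover `v̄(D(φ)) = Γ/2Γ`, then the image under `v̄` of the
nonzero values of the pure part `φ'` (the restriction of `φ` to the vectors whose
`[1,αₙ]`-block has second coordinate zero) is exactly `Γ/2Γ ∖ {v̄(αₙ)}`. -/
theorem stmt_12 (F Γ : Type*) [Field F] [CharP F 2]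
    [AddCommGroup Γ] [LinearOrder Γ] [IsOrderedAddMonoid Γ] (v : F → Γ)
    (hmul : ∀ x y : F, x ≠ 0 → y ≠ 0 → v (x * y) = v x + v y)
    (hadd : ∀ x y : F, x ≠ 0 → y ≠ 0 → x + y ≠ 0 → min (v x) (v y) ≤ v (x + y))
    (hsurj : ∀ g : Γ, ∃ x : F, x ≠ 0 ∧ v x = g)
    (n : ℕ) (hn : 1 ≤ n) (α : Fin n → F) (hα0 : ∀ i, α i ≠ 0)
    (hneg : ∀ i, v (α i) < 0)
    (hind : ∀ c : Fin n → Bool, (∃ i, c i = true) →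
      ∀ h : Γ, (∑ i, if c i then v (α i) else 0) ≠ 2 • h)
    (hfull : ∀ g : Γ, ∃ x : (Fin (n - 1) → Bool) → F × F,
      qPf F (front α) (qlast α) x ≠ 0 ∧
        ∃ h : Γ, g = v (qPf F (front α) (qlast α) x) + 2 • h) :
    (∀ x : (Fin (n - 1) → Bool) → F × F, (x fun _ => false).2 = 0 →
      qPf F (front α) (qlast α) x ≠ 0 →
        ∀ h : Γ, v (qPf F (front α) (qlast α) x) ≠ v (qlast α) + 2 • h) ∧
    (∀ g : Γ, (∀ h : Γ, g ≠ v (qlast α) + 2 • h) →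
      ∃ x : (Fin (n - 1) → Bool) → F × F, (x fun _ => false).2 = 0 ∧
        qPf F (front α) (qlast α) x ≠ 0 ∧
          ∃ h : Γ, g = v (qPf F (front α) (qlast α) x) + 2 • h) := by
  classical
  obtain ⟨m, rfl⟩ : ∃ m, n = m + 1 := ⟨n - 1, by omega⟩
  have hq : qlast α = α (Fin.last m) := by
    rw [qlast, dif_neg (Nat.succ_ne_zero m)]
    rfl
  have han : qlast α ≠ 0 := by rw [hq]; exact hα0 _
  have hnegan : v (qlast α) < 0 := by rw [hq]; exact hneg _
  have hcl : ∀ h : Γ, v (qlast α) ≠ 2 • h := by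
    intro h hcontra
    apply hind (fun i => decide (i = Fin.last m)) ⟨Fin.last m, by simp⟩ h
    rw [Finset.sum_eq_single_of_mem (Fin.last m) (Finset.mem_univ _)
      (fun j _ hj => by simp [hj])]
    simpa using hq ▸ hcontra
  -- sum over Fin (m+1) of a snoc
  have hsnoc : ∀ (e : Fin m → Bool) (ε : Bool),
      (∑ i : Fin (m + 1), if (Fin.snoc e ε : Fin (m + 1) → Bool) i then v (α i) else 0)
        = (∑ i : Fin m, if e i then v (front α i) else 0)
          + (if ε then v (qlast α) else 0) := by
    intro e ε
    rw [Fin.sum_univ_castSucc]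
    congr 1
    · refine Finset.sum_congr rfl fun i _ => ?_
      rw [Fin.snoc_castSucc]
      rfl
    · rw [Fin.snoc_last, hq]
  -- distinctness of classes
  have hS : ∀ c c' : Fin (m + 1) → Bool, c ≠ c' → ∀ h h' : Γ,
      (∑ i, if c i then v (α i) else 0) + 2 • h
        ≠ (∑ i, if c' i then v (α i) else 0) + 2 • h' := by
    intro c c' hne h h' heq
    obtain ⟨i0, hi0⟩ := Function.ne_iff.mp hne
    have hi0' : xor (c i0) (c' i0) = true := by
      revert hi0; cases c i0 <;> cases c' i0 <;> simp
    apply hind (fun i => xor (c i) (c' i)) ⟨i0, hi0'⟩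
      (h' - h + ∑ i, if (!c i && c' i) then v (α i) else 0)
    have expand : ∀ j : Fin (m + 1), (if xor (c j) (c' j) then v (α j) else 0)
        = ((if c j then v (α j) else 0) - (if c' j then v (α j) else 0))
          + 2 • (if (!c j && c' j) then v (α j) else 0) := by
      intro j
      cases c j <;> cases c' j <;> simp [two_smul] <;> abel
    calc (∑ i, if xor (c i) (c' i) then v (α i) else 0)
        = ∑ i, (((if c i then v (α i) else 0) - (if c' i then v (α i) else 0))
            + 2 • (if (!c i && c' i) then v (α i) else 0)) :=
          Finset.sum_congr rfl fun j _ => expand j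
      _ = ((∑ i, if c i then v (α i) else 0) - (∑ i, if c' i then v (α i) else 0))
            + 2 • (∑ i, if (!c i && c' i) then v (α i) else 0) := by
          rw [Finset.sum_add_distrib, Finset.sum_sub_distrib, Finset.smul_sum]
      _ = 2 • (h' - h + ∑ i, if (!c i && c' i) then v (α i) else 0) := by
          have h2 : (∑ i, if c i then v (α i) else 0)
              = (∑ i, if c' i then v (α i) else 0) + 2 • h' - 2 • h := by
            rw [← heq]; abel
          rw [h2, smul_add, smul_sub]
          abel
  have hc₀ : (∑ i, if (Fin.snoc (fun _ => false) true : Fin (m + 1) → Bool) i then v (α i) else 0)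
      = v (qlast α) := by
    rw [hsnoc]; simp
  have hmono_ne : ∀ e : Fin m → Bool, mono (front α) e ≠ 0 := by
    intro e
    refine Finset.prod_ne_zero_iff.mpr fun i _ => ?_
    split
    · exact hα0 _
    · exact one_ne_zero
  have hmono_v : ∀ e : Fin m → Bool,
      v (mono (front α) e) = ∑ i, if e i then v (front α i) else 0 := by
    intro e
    rw [mono, v_prod' v hmul _ _ (fun i _ => by split; exacts [hα0 _, one_ne_zero])]
    refine Finset.sum_congr rfl fun i _ => ?_
    by_cases he : e i = true <;> simp [he, v_one' v hmul]
  -- the main structure lemma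
  have main : ∀ x : (Fin m → Bool) → F × F, qPf F (front α) (qlast α) x ≠ 0 →
      ∃ e : Fin m → Bool,
        (((x e).1 ≠ 0 ∧ v (qPf F (front α) (qlast α) x)
            = (∑ i, if (Fin.snoc e false : Fin (m + 1) → Bool) i then v (α i) else 0) + 2 • v (x e).1)
          ∨ ((x e).2 ≠ 0 ∧ v (qPf F (front α) (qlast α) x)
            = (∑ i, if (Fin.snoc e true : Fin (m + 1) → Bool) i then v (α i) else 0) + 2 • v (x e).2)) := by
    intro x hx
    set f : (Fin m → Bool) → F := fun e =>
      mono (front α) e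
        * ((x e).1 ^ 2 + (x e).1 * (x e).2 + qlast α * (x e).2 ^ 2) with hf
    have hval : ∀ e, f e ≠ 0 →
        (((x e).1 ≠ 0 ∧ v (f e)
            = (∑ i, if (Fin.snoc e false : Fin (m + 1) → Bool) i then v (α i) else 0) + 2 • v (x e).1)
          ∨ ((x e).2 ≠ 0 ∧ v (f e)
            = (∑ i, if (Fin.snoc e true : Fin (m + 1) → Bool) i then v (α i) else 0) + 2 • v (x e).2)) := by
      intro e hfe
      have hblock_ne : ((x e).1 ^ 2 + (x e).1 * (x e).2 + qlast α * (x e).2 ^ 2) ≠ 0 :=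
        fun h => hfe (by rw [hf]; simp only [h, mul_zero])
      have hxy : ¬((x e).1 = 0 ∧ (x e).2 = 0) := by
        rintro ⟨h1, h2⟩; apply hblock_ne; rw [h1, h2]; ring
      obtain ⟨-, hcase⟩ := v_block' v hmul hadd (qlast α) han hnegan hcl (x e).1 (x e).2 hxy
      have hvfe : v (f e) = v (mono (front α) e)
          + v ((x e).1 ^ 2 + (x e).1 * (x e).2 + qlast α * (x e).2 ^ 2) :=
        hmul _ _ (hmono_ne e) hblock_ne
      rcases hcase with ⟨h1, h2⟩ | ⟨h1, h2⟩
      · left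
        refine ⟨h1, ?_⟩
        rw [hvfe, h2, hmono_v, hsnoc]
        simp only [if_neg Bool.false_ne_true, add_zero]
      · right
        refine ⟨h1, ?_⟩
        rw [hvfe, h2, hmono_v, hsnoc]
        simp only [if_pos rfl]
        rw [if_pos trivial]
        abel
    have hdist : ∀ e ∈ Finset.univ, ∀ e' ∈ (Finset.univ : Finset (Fin m → Bool)),
        e ≠ e' → f e ≠ 0 → f e' ≠ 0 → v (f e) ≠ v (f e') := by
      intro e _ e' _ hee' hfe hfe'
      have snocne : ∀ ε ε' : Bool, (Fin.snoc e ε : Fin (m+1) → Bool) ≠ Fin.snoc e' ε' := by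
        intro ε ε' hsn
        apply hee'
        funext i
        have := congrFun hsn (Fin.castSucc i)
        rwa [Fin.snoc_castSucc, Fin.snoc_castSucc] at this
      rcases hval e hfe with ⟨-, h2⟩ | ⟨-, h2⟩ <;>
        rcases hval e' hfe' with ⟨-, h2'⟩ | ⟨-, h2'⟩ <;>
        · rw [h2, h2']; exact hS _ _ (snocne _ _) _ _
    have hqpf : qPf F (front α) (qlast α) x = ∑ e, f e := rfl
    rcases v_sum' v hmul hadd Finset.univ f hdist with h0 | ⟨-, e, -, hfe, hveq⟩
    · exact absurd (hqpf.trans h0) hx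
    · refine ⟨e, ?_⟩
      rw [hqpf, hveq]
      exact hval e hfe
  constructor
  · -- part 1
    intro x hx0 hx h heq
    obtain ⟨e, hcase⟩ := main x hx
    rcases hcase with ⟨h1, h2⟩ | ⟨h1, h2⟩
    · refine hS (Fin.snoc e false) (Fin.snoc (fun _ => false) true) ?_ (v (x e).1) h ?_
      · intro hsn
        have := congrFun hsn (Fin.last m)
        rw [Fin.snoc_last, Fin.snoc_last] at this
        exact Bool.false_ne_true this
      · rw [← h2, heq, hc₀]
    · by_cases he : e = fun _ => false
      · rw [he] at h1; exact h1 hx0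
      · obtain ⟨i, hi⟩ := Function.ne_iff.mp he
        refine hS (Fin.snoc e true) (Fin.snoc (fun _ => false) true) ?_ (v (x e).2) h ?_
        · intro hsn
          apply hi
          have := congrFun hsn (Fin.castSucc i)
          rwa [Fin.snoc_castSucc, Fin.snoc_castSucc] at this
        · rw [← h2, heq, hc₀]
  · -- part 2
    intro g hg
    obtain ⟨x, hx, h, hgh⟩ := hfull g
    obtain ⟨e, hcase⟩ := main x hx
    rcases hcase with ⟨h1, h2⟩ | ⟨h1, h2⟩
    · set x' : (Fin m → Bool) → F × F := fun e' => if e' = e then ((x e).1, 0) else (0, 0)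
        with hx'def
      have hφ' : qPf F (front α) (qlast α) x' = mono (front α) e * (x e).1 ^ 2 := by
        have hsum : (∑ e' : Fin m → Bool, mono (front α) e'
              * ((x' e').1 ^ 2 + (x' e').1 * (x' e').2 + qlast α * (x' e').2 ^ 2))
            = mono (front α) e
              * ((x' e).1 ^ 2 + (x' e).1 * (x' e).2 + qlast α * (x' e).2 ^ 2) :=
          Finset.sum_eq_single_of_mem e (Finset.mem_univ e)
            (fun b _ hb => by simp [hx'def, if_neg hb])
        refine Eq.trans hsum ?_
        simp only [hx'def, if_pos rfl]
        ring
      have hne' : qPf F (front α) (qlast α) x' ≠ 0 := by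
        rw [hφ']; exact mul_ne_zero (hmono_ne e) (pow_ne_zero 2 h1)
      have hveq : v (qPf F (front α) (qlast α) x')
          = v (qPf F (front α) (qlast α) x) := by
        rw [hφ', hmul _ _ (hmono_ne e) (pow_ne_zero 2 h1), v_sq' v hmul _ h1,
          hmono_v, h2, hsnoc]
        simp only [if_neg Bool.false_ne_true, add_zero]
      refine ⟨x', ?_, hne', h, ?_⟩
      · simp only [hx'def]
        split <;> rfl
      · rw [hveq]; exact hgh
    · have he : e ≠ fun _ => false := by
        rintro rfl
        refine hg (v (x fun _ => false).2 + h) ?_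
        rw [hgh, h2, hc₀, smul_add, add_assoc]
        rfl
      set x' : (Fin m → Bool) → F × F := fun e' => if e' = e then (0, (x e).2) else (0, 0)
        with hx'def
      have hφ' : qPf F (front α) (qlast α) x'
          = mono (front α) e * (qlast α * (x e).2 ^ 2) := by
        have hsum : (∑ e' : Fin m → Bool, mono (front α) e'
              * ((x' e').1 ^ 2 + (x' e').1 * (x' e').2 + qlast α * (x' e').2 ^ 2))
            = mono (front α) e
              * ((x' e).1 ^ 2 + (x' e).1 * (x' e).2 + qlast α * (x' e).2 ^ 2) :=
          Finset.sum_eq_single_of_mem e (Finset.mem_univ e)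
            (fun b _ hb => by simp [hx'def, if_neg hb])
        refine Eq.trans hsum ?_
        simp only [hx'def, if_pos rfl]
        ring
      have hbl : qlast α * (x e).2 ^ 2 ≠ 0 := mul_ne_zero han (pow_ne_zero 2 h1)
      have hne' : qPf F (front α) (qlast α) x' ≠ 0 := by
        rw [hφ']; exact mul_ne_zero (hmono_ne e) hbl
      have hveq : v (qPf F (front α) (qlast α) x')
          = v (qPf F (front α) (qlast α) x) := by
        rw [hφ', hmul _ _ (hmono_ne e) hbl, hmul _ _ han (pow_ne_zero 2 h1),
          v_sq' v hmul _ h1, hmono_v, h2, hsnoc]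
        simp only [if_pos rfl]
        rw [if_pos trivial]
        abel
      refine ⟨x', ?_, hne', h, ?_⟩
      · simp only [hx'def]
        rw [if_neg (fun hh => he hh.symm)]
      · rw [hveq]; exact hgh
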